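/- For every integer n ≥ 1 and every integer x, the operator Y acts tridiagonally on the basis functions φ_n: (Y φ_n(·;α))(x) = ν₁ · φ_{n+1}(x;α) + ν₂ · φ_n(x;α) + ν₃ · φ_{n−1}(x;α), where ν₁ = n²(n + β − N), ν₂ = −2n³ + (2(1+N) + α − β)n² + (−N − 1 + α(β − N))n, and ν₃ = n(N − n + 1)(α − n + 1). -/

import Mathlib

/-- Pochhammer symbol `(a)_k = a (a+1) ⋯ (a+k-1)`, with `(a)_0 = 1`. -/
noncomputable def poch (a : ℝ) (k : ℕ) : ℝ := ∏ i ∈ Finset.range k, (a + (i : ℝ))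

/-- Basis functions `φ_n(x;α) = (-x)_n / (α-x)_n`. -/
noncomputable def phi (α : ℝ) (n : ℕ) (x : ℤ) : ℝ :=
  poch (-(x : ℝ)) n / poch (α - (x : ℝ)) n

/-- Coefficients of the difference operator `Y`. -/
noncomputable def A1 (α β : ℝ) (N : ℕ) (x : ℝ) : ℝ := (x - α) * (x - (N : ℝ)) * (x + 1 - α)
noncomputable def A2 (α β : ℝ) (N : ℕ) (x : ℝ) : ℝ := x * (x - α) * (x + β - α - (N : ℝ))
noncomputable def A0 (α β : ℝ) (N : ℕ) (x : ℝ) : ℝ :=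
  (x - α) * (-2 * x ^ 2 + (2 * α - 1 + 2 * (N : ℝ) - β) * x - (N : ℝ) * (α - 1))

/-- The difference operator `Y`: `(Y f)(x) = A₁(x) f(x+1) + A₂(x) f(x-1) + A₀(x) f(x)`. -/
noncomputable def Yop (α β : ℝ) (N : ℕ) (f : ℤ → ℝ) (x : ℤ) : ℝ :=
  A1 α β N (x : ℝ) * f (x + 1) + A2 α β N (x : ℝ) * f (x - 1) + A0 α β N (x : ℝ) * f x

lemma poch_succ (a : ℝ) (k : ℕ) : poch a (k + 1) = poch a k * (a + k) := by
  simp [poch, Finset.prod_range_succ]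

lemma poch_succ' (a : ℝ) (k : ℕ) : poch a (k + 1) = a * poch (a + 1) k := by
  rw [poch, Finset.prod_range_succ', mul_comm]
  simp only [Nat.cast_zero, add_zero]
  congr 1
  apply Finset.prod_congr rfl
  intro i _
  push_cast
  ring

theorem statement2 (N : ℕ) (hN : 0 < N) (α β : ℝ) (hα : ∀ m : ℤ, α ≠ (m : ℝ))
    (n : ℕ) (hn : 1 ≤ n) (x : ℤ) :
    Yop α β N (phi α n) x =
      ((n : ℝ) ^ 2 * ((n : ℝ) + β - (N : ℝ))) * phi α (n + 1) x
      + (-2 * (n : ℝ) ^ 3 + (2 * (1 + (N : ℝ)) + α - β) * (n : ℝ) ^ 2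
          + (-(N : ℝ) - 1 + α * (β - (N : ℝ))) * (n : ℝ)) * phi α n x
      + ((n : ℝ) * ((N : ℝ) - (n : ℝ) + 1) * (α - (n : ℝ) + 1)) * phi α (n - 1) x := by
  obtain ⟨m, rfl⟩ : ∃ m, n = m + 1 := ⟨n - 1, (Nat.succ_pred_eq_of_pos hn).symm⟩
  have hz : ∀ c : ℤ, α - (c : ℝ) ≠ 0 := by
    intro c h
    exact hα c (by linarith)
  have hqz : ∀ (c : ℤ) (k : ℕ), poch (α - (c : ℝ)) k ≠ 0 := by
    intro c k
    rw [poch]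
    apply Finset.prod_ne_zero_iff.mpr
    intro i _
    have := hz (c - (i : ℤ))
    push_cast at this
    intro h; apply this; linarith
  set a : ℝ := -(x : ℝ) with ha
  set b : ℝ := α - (x : ℝ) with hb
  set p : ℝ := poch a m with hp
  set q : ℝ := poch b m with hqq
  have hq0 : q ≠ 0 := hqz x m
  have hbm : b + m ≠ 0 := by
    have := hz (x - (m : ℤ)); push_cast at this; intro h; apply this; rw [hb] at h; linarith
  have hbm1 : b + m + 1 ≠ 0 := by
    have := hz (x - (m : ℤ) - 1); push_cast at this; intro h; apply this; rw [hb] at h; linarith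
  have hb1 : b - 1 ≠ 0 := by
    have := hz (x + 1); push_cast at this; intro h; apply this; rw [hb] at h; linarith
  have hb0 : b ≠ 0 := hz x
  have e0 : phi α (m + 1 - 1) x = p / q := by
    simp [phi, hp, hqq, ha, hb]
  have e1 : phi α (m + 1) x = p * (a + m) / (q * (b + m)) := by
    rw [phi, poch_succ, poch_succ, ← hp, ← hqq, ← ha, ← hb]
  have e2 : phi α (m + 1 + 1) x = p * (a + m) * (a + m + 1) / (q * (b + m) * (b + m + 1)) := by
    rw [phi, poch_succ, poch_succ, poch_succ, poch_succ, ← hp, ← hqq, ← ha, ← hb]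
    push_cast
    ring_nf
  have e3 : phi α (m + 1) (x + 1) = (a - 1) * p / ((b - 1) * q) := by
    rw [phi]
    have h1 : (-(((x + 1 : ℤ)) : ℝ)) = a - 1 := by push_cast; rw [ha]; ring
    have h2 : (α - (((x + 1 : ℤ)) : ℝ)) = b - 1 := by push_cast; rw [hb]; ring
    rw [h1, h2, poch_succ', poch_succ']
    rw [show a - 1 + 1 = a by ring, show b - 1 + 1 = b by ring, ← hp, ← hqq]
  -- the (x-1) term, handled together with its coefficient to avoid dividing by a
  have e4n : (x : ℝ) * poch (a + 1) (m + 1) = -(p * (a + m) * (a + m + 1)) := by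
    have : a * poch (a + 1) (m + 1) = p * (a + m) * (a + m + 1) := by
      rw [← poch_succ', poch_succ, poch_succ, ← hp]; push_cast; ring
    rw [show (x : ℝ) = -a by rw [ha]; ring]
    linarith [this]
  have e4d : poch (b + 1) (m + 1) = q * (b + m) * (b + m + 1) / b := by
    rw [eq_div_iff hb0, mul_comm, ← poch_succ', poch_succ, poch_succ, ← hqq]
    push_cast; ring
  have e4 : (x : ℝ) * ((x : ℝ) - α) * ((x : ℝ) + β - α - (N : ℝ)) * phi α (m + 1) (x - 1)
      = -(((x : ℝ) - α) * ((x : ℝ) + β - α - (N : ℝ))) * (p * (a + m) * (a + m + 1)) * b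
        / (q * (b + m) * (b + m + 1)) := by
    rw [phi]
    have h1 : (-(((x - 1 : ℤ)) : ℝ)) = a + 1 := by push_cast; rw [ha]; ring
    have h2 : (α - (((x - 1 : ℤ)) : ℝ)) = b + 1 := by push_cast; rw [hb]; ring
    rw [h1, h2, e4d]
    rw [div_div_eq_mul_div]
    field_simp
    linear_combination (((x : ℝ) - α) * ((x : ℝ) + β - α - (N : ℝ))) * e4n
  rw [Yop, A1, A2, A0, e0, e1, e2, e3, e4]
  have hx : (x : ℝ) = -a := by rw [ha]; ring
  have hal : α = b - a := by rw [ha, hb]; ring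
  rw [hx, hal]
  field_simp
  push_cast
  ring
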